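/- arXiv:1908.09821 — 2 statements merged into one kernel-verified Lean document; each statement's English description precedes it below -/
import Mathlib

section
/- Let λ be a weak composition of n, w ∈ S_n with R(w) row-strict, and 2 ≤ k ≤ n. Then the set B_k(w) of matrices g_k defined by: (1) g_k e_{w(j)} = e_{w(j)} + x_{w(k)w(ℓ)} X_λ^m e_{w(k)} whenever (k,ℓ) ∈ inv_λ^k(w) and e_{w(j)} = X_λ^m e_{w(ℓ)} for some m ≥ 0 (with arbitrary scalars x_{w(k)w(ℓ)} ∈ ℂ), and (2) g_k e_{w(j)} = e_{w(j)} otherwise, is an abelian subgroup of the group of upper triangular unipotent matrices U, of dimension |inv_λ^k(w)|. The product of the elements with coordinate vectors x and y is the element with coordinate vector x + y. -/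
open Matrix

attribute [local instance] Classical.propDecidable

noncomputable section

/-- Label of the box in row `i` (0-indexed from the top), column `j` (0-indexed) of the base
filling of the weak composition `lam`: columns filled left to right, each column bottom to top,
labels `1,…,n`. -/
def baseLabel (lam : List ℕ) (i j : ℕ) : ℕ :=
  (∑ i' ∈ Finset.range lam.length, min (lam.getD i' 0) j) +
    ((Finset.Ico i lam.length).filter (fun i' => j < lam.getD i' 0)).card

def IsBox (lam : List ℕ) (i j : ℕ) : Prop :=
  i < lam.length ∧ j < lam.getD i 0

/-- The nilpotent matrix `X_λ = Σ E_{ℓ r}` over pairs where the box labeled `r` is directly right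
of the box labeled `ℓ` in the base filling (labels are 1-indexed; matrix indices 0-indexed). -/
def Xlam (n : ℕ) (lam : List ℕ) : Matrix (Fin n) (Fin n) ℂ :=
  fun ℓ r => if (∃ i j, IsBox lam i (j+1) ∧ baseLabel lam i j = (ℓ : ℕ) + 1 ∧
      baseLabel lam i (j+1) = (r : ℕ) + 1) then 1 else 0

def IsFullFlag (n : ℕ) (V : ℕ → Submodule ℂ (Fin n → ℂ)) : Prop :=
  V 0 = ⊥ ∧ (∀ i, V i ≤ V (i+1)) ∧ ∀ i, i ≤ n → Module.finrank ℂ (V i) = i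

def InHess (n : ℕ) (X : Matrix (Fin n) (Fin n) ℂ) (h : ℕ → ℕ)
    (V : ℕ → Submodule ℂ (Fin n → ℂ)) : Prop :=
  ∀ i, i ≤ n → ∀ v ∈ V i, X.mulVec v ∈ V (h i)

/-- The flag `wE_•`, whose `k`-th space is spanned by `e_{w(1)},…,e_{w(k)}` (0-indexed). -/
def permFlag (n : ℕ) (w : Equiv.Perm (Fin n)) : ℕ → Submodule ℂ (Fin n → ℂ) :=
  fun k => Submodule.span ℂ {v | ∃ j : Fin n, (j : ℕ) < k ∧ v = Pi.single (w j) (1 : ℂ)}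

/-- The flag whose `k`-th space is spanned by the first `k` columns of `g`. -/
def matFlag (n : ℕ) (g : Matrix (Fin n) (Fin n) ℂ) : ℕ → Submodule ℂ (Fin n → ℂ) :=
  fun k => Submodule.span ℂ {c | ∃ j : Fin n, (j : ℕ) < k ∧ c = fun a => g a j}

def permMat (n : ℕ) (σ : Equiv.Perm (Fin n)) : Matrix (Fin n) (Fin n) ℂ :=
  fun a b => if σ b = a then 1 else 0

def invSet (n : ℕ) (w : Equiv.Perm (Fin n)) : Finset (Fin n × Fin n) :=
  Finset.univ.filter (fun p => p.2 < p.1 ∧ w p.1 < w p.2)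

def blen (n : ℕ) (w : Equiv.Perm (Fin n)) : ℕ := (invSet n w).card

/-- `v = s_i s_{i+1} ⋯ s_{n-1}` (0-indexed simple transpositions `swap j (j+1)`). -/
def vPerm (n : ℕ) (i : ℕ) : Equiv.Perm (Fin (n+1)) :=
  ((List.Ico i n).map (fun j : ℕ => Equiv.swap (Fin.ofNat (n+1) j) (Fin.ofNat (n+1) (j+1 : ℕ)))).prod

/-- `R(w)` is row-strict: the entry in the box labeled `m` of the base filling is `w⁻¹(m)`,
so entry `p` (0-indexed) occupies the box whose base label is `w(p)+1`. -/
def RowStrictT (n : ℕ) (lam : List ℕ) (w : Equiv.Perm (Fin n)) : Prop :=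
  ∀ i j, IsBox lam i (j+1) → ∀ p q : Fin n,
    (w p : ℕ) + 1 = baseLabel lam i j → (w q : ℕ) + 1 = baseLabel lam i (j+1) → p < q

def HStrictT (n : ℕ) (lam : List ℕ) (h : ℕ → ℕ) (w : Equiv.Perm (Fin n)) : Prop :=
  ∀ i j, IsBox lam i (j+1) → ∀ p q : Fin n,
    (w p : ℕ) + 1 = baseLabel lam i j → (w q : ℕ) + 1 = baseLabel lam i (j+1) →
      (p : ℕ) + 1 ≤ h ((q : ℕ) + 1)

/-- `(k,ℓ)` is a Hessenberg inversion of `R(w)` (entries 0-indexed: values are index+1). -/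
def HessInvT (n : ℕ) (lam : List ℕ) (h : ℕ → ℕ) (w : Equiv.Perm (Fin n)) (k ℓ : Fin n) : Prop :=
  ℓ < k ∧ ∃ ik jk il jl : ℕ, IsBox lam ik jk ∧ IsBox lam il jl ∧
    baseLabel lam ik jk = (w k : ℕ) + 1 ∧ baseLabel lam il jl = (w ℓ : ℕ) + 1 ∧
    (jk < jl ∨ (jk = jl ∧ il < ik)) ∧
    (∀ r : Fin n, IsBox lam il (jl + 1) → (w r : ℕ) + 1 = baseLabel lam il (jl + 1) →
      (k : ℕ) + 1 ≤ h ((r : ℕ) + 1))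

/-- Springer inversions: Hessenberg inversions for `h = (0,1,…,n-1)`, i.e. `h(i) = i - 1`. -/
def SpringerInvT (n : ℕ) (lam : List ℕ) (w : Equiv.Perm (Fin n)) (k ℓ : Fin n) : Prop :=
  HessInvT n lam (fun m => m - 1) w k ℓ

/-- The box labeled `b+1` is directly right of the box labeled `a+1` in the base filling. -/
def RightNbr (lam : List ℕ) (a b : ℕ) : Prop :=
  ∃ i j, IsBox lam i (j+1) ∧ baseLabel lam i j = a + 1 ∧ baseLabel lam i (j+1) = b + 1

/-- The box labeled `a+1` is at the end of its row in the base filling. -/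
def EndOfRow (lam : List ℕ) (a : ℕ) : Prop :=
  ∃ i j, IsBox lam i j ∧ ¬ IsBox lam i (j+1) ∧ baseLabel lam i j = a + 1

def IsUpperUnip (n : ℕ) (g : Matrix (Fin n) (Fin n) ℂ) : Prop :=
  (∀ i, g i i = 1) ∧ ∀ i j : Fin n, j < i → g i j = 0

/-- `U_i`: upper unipotent matrices whose off-diagonal entries are supported in row `i`. -/
def InUi (n : ℕ) (i : Fin n) (g : Matrix (Fin n) (Fin n) ℂ) : Prop :=
  IsUpperUnip n g ∧ ∀ a b : Fin n, a ≠ b → g a b ≠ 0 → a = i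

/-- `U_0`: upper unipotent matrices of `GL_n` embedded in `GL_{n+1}` (last column trivial). -/
def InU0 (n : ℕ) (g : Matrix (Fin (n+1)) (Fin (n+1)) ℂ) : Prop :=
  IsUpperUnip (n+1) g ∧ ∀ a : Fin (n+1), a ≠ Fin.last n → g a (Fin.last n) = 0

/-- The element of `B_k(w)` with coordinates `x`: it sends `e_{w(j)} = X_λ^m e_{w(ℓ)}` to
`e_{w(j)} + x ℓ • X_λ^m e_{w(k)}` for Springer inversions `(k,ℓ)`, fixing all other `e_{w(j)}`. -/
def BkMat (n : ℕ) (lam : List ℕ) (w : Equiv.Perm (Fin n)) (k : Fin n) (x : Fin n → ℂ) :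
    Matrix (Fin n) (Fin n) ℂ :=
  1 + ∑ ℓ : Fin n, if SpringerInvT n lam w k ℓ then
      x ℓ • (∑ m ∈ Finset.range n,
        (Xlam n lam) ^ m * Matrix.single (w k) (w ℓ) (1 : ℂ) * ((Xlam n lam)ᵀ) ^ m)
    else 0

/-- The product `g_n g_{n-1} ⋯ g_2` of elements `g_k ∈ B_k(w)` with coordinates `x k`. -/
def bigB (n : ℕ) (lam : List ℕ) (w : Equiv.Perm (Fin n)) (x : Fin n → Fin n → ℂ) :
    Matrix (Fin n) (Fin n) ℂ :=
  ((List.ofFn (fun k : Fin n => BkMat n lam w k (x k))).reverse).prod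

/- Abstract fillings `T : row → column → value` of the diagram of `lam`, values in `[1, n]`. -/

def RowStrictF (lam : List ℕ) (T : ℕ → ℕ → ℕ) : Prop :=
  ∀ i j, IsBox lam i (j+1) → T i j < T i (j+1)

def HStrictF (lam : List ℕ) (h : ℕ → ℕ) (T : ℕ → ℕ → ℕ) : Prop :=
  ∀ i j, IsBox lam i (j+1) → T i j ≤ h (T i (j+1))

def GoodFilling (lam : List ℕ) (T : ℕ → ℕ → ℕ) : Prop :=
  (∀ i j, IsBox lam i j → 1 ≤ T i j ∧ T i j ≤ lam.sum) ∧
  (∀ m, 1 ≤ m → m ≤ lam.sum → ∃ i j, IsBox lam i j ∧ T i j = m) ∧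
  (∀ i j i' j', IsBox lam i j → IsBox lam i' j' → T i j = T i' j' → i = i' ∧ j = j')

def HessInvF (lam : List ℕ) (h : ℕ → ℕ) (T : ℕ → ℕ → ℕ) (k ℓ : ℕ) : Prop :=
  ℓ < k ∧ ∃ ik jk il jl : ℕ, IsBox lam ik jk ∧ IsBox lam il jl ∧
    T ik jk = k ∧ T il jl = ℓ ∧
    (jk < jl ∨ (jk = jl ∧ il < ik)) ∧
    (IsBox lam il (jl + 1) → k ≤ h (T il (jl + 1)))

/-- `S` is obtained from `T` by sorting each column increasingly from top to bottom:
same column entries (as sets, entries being distinct), with columns of `S` increasing. -/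
def ColSortedOf (lam : List ℕ) (T S : ℕ → ℕ → ℕ) : Prop :=
  (∀ j m, (∃ i, IsBox lam i j ∧ T i j = m) ↔ (∃ i, IsBox lam i j ∧ S i j = m)) ∧
  (∀ i j, IsBox lam i j → IsBox lam (i+1) j → S i j < S (i+1) j)

def IsPartitionL (lam : List ℕ) : Prop :=
  ∀ i i', i ≤ i' → lam.getD i' 0 ≤ lam.getD i 0

def hessInvCount (lam : List ℕ) (h : ℕ → ℕ) (T : ℕ → ℕ → ℕ) : ℕ :=
  (((Finset.range (lam.sum + 1)) ×ˢ (Finset.range (lam.sum + 1))).filter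
    (fun p => HessInvF lam h T p.1 p.2)).card

def Hspace (n : ℕ) (h : ℕ → ℕ) : Submodule ℂ (Matrix (Fin n) (Fin n) ℂ) :=
  Submodule.span ℂ
    {A | ∃ i j : Fin n, (i : ℕ) + 1 ≤ h ((j : ℕ) + 1) ∧ A = Matrix.single i j (1 : ℂ)}

/-- Left-nested iterated bracket `[f (m), [f (m-1), [⋯ [f 1, f 0]]]]`. -/
def iterBr (n : ℕ) (f : ℕ → Matrix (Fin n) (Fin n) ℂ) : ℕ → Matrix (Fin n) (Fin n) ℂ
  | 0 => f 0
  | (m+1) => f (m+1) * iterBr n f m - iterBr n f m * f (m+1)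


namespace Stmt10Aux

def Cfun (lam : List ℕ) (j : ℕ) : ℕ := ∑ i' ∈ Finset.range lam.length, min (lam.getD i' 0) j

lemma list_sum_eq (l : List ℕ) : l.sum = ∑ i ∈ Finset.range l.length, l.getD i 0 := by
  induction l with
  | nil => simp
  | cons a l ih =>
    rw [List.sum_cons, List.length_cons, Finset.sum_range_succ', ih]
    simp [Nat.add_comm]

lemma baseLabel_eq (lam : List ℕ) (i j : ℕ) : baseLabel lam i j =
    Cfun lam j + ((Finset.Ico i lam.length).filter (fun i' => j < lam.getD i' 0)).card := rfl

lemma Cfun_succ (lam : List ℕ) (j : ℕ) : Cfun lam (j+1) =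
    Cfun lam j + ((Finset.range lam.length).filter (fun i' => j < lam.getD i' 0)).card := by
  unfold Cfun
  rw [Finset.card_filter, ← Finset.sum_add_distrib]
  refine Finset.sum_congr rfl fun i _ => ?_
  rcases le_or_gt (lam.getD i 0) j with h | h
  · rw [if_neg (Nat.not_lt.mpr h)]; omega
  · rw [if_pos h]; omega

lemma Cfun_mono (lam : List ℕ) {j j' : ℕ} (h : j ≤ j') : Cfun lam j ≤ Cfun lam j' :=
  Finset.sum_le_sum fun i _ => min_le_min le_rfl h

lemma Cfun_le_sum (lam : List ℕ) (j : ℕ) : Cfun lam j ≤ lam.sum := by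
  rw [list_sum_eq]
  exact Finset.sum_le_sum fun i _ => Nat.min_le_left _ _

lemma lab_gt {lam : List ℕ} {i j : ℕ} (h : IsBox lam i j) : Cfun lam j < baseLabel lam i j := by
  rw [baseLabel_eq]
  have : 0 < ((Finset.Ico i lam.length).filter (fun i' => j < lam.getD i' 0)).card := by
    refine Finset.card_pos.mpr ⟨i, Finset.mem_filter.mpr ⟨Finset.mem_Ico.mpr ⟨le_rfl, h.1⟩, h.2⟩⟩
  omega

lemma lab_le {lam : List ℕ} {i j : ℕ} (h : IsBox lam i j) : baseLabel lam i j ≤ Cfun lam (j+1) := by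
  rw [baseLabel_eq, Cfun_succ]
  refine Nat.add_le_add_left (Finset.card_le_card (Finset.filter_subset_filter _ ?_)) _
  intro a ha
  simp only [Finset.mem_Ico] at ha
  exact Finset.mem_range.mpr ha.2

lemma lab_pos {lam : List ℕ} {i j : ℕ} (h : IsBox lam i j) : 1 ≤ baseLabel lam i j := by
  have := lab_gt h; omega

lemma lab_le_n {lam : List ℕ} {i j : ℕ} (h : IsBox lam i j) : baseLabel lam i j ≤ lam.sum :=
  (lab_le h).trans (Cfun_le_sum lam (j+1))

lemma lab_lt_col {lam : List ℕ} {i j i' j' : ℕ} (h : IsBox lam i j) (h' : IsBox lam i' j')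
    (hj : j < j') : baseLabel lam i j < baseLabel lam i' j' :=
  lt_of_le_of_lt ((lab_le h).trans (Cfun_mono lam hj)) (lab_gt h')

lemma lab_lt_row {lam : List ℕ} {i j i' : ℕ} (h : IsBox lam i j) (h' : IsBox lam i' j)
    (hi : i < i') : baseLabel lam i' j < baseLabel lam i j := by
  rw [baseLabel_eq, baseLabel_eq]
  refine Nat.add_lt_add_left (Finset.card_lt_card ?_) _
  refine (Finset.ssubset_iff_of_subset (Finset.filter_subset_filter _ ?_)).mpr
    ⟨i, Finset.mem_filter.mpr ⟨Finset.mem_Ico.mpr ⟨le_rfl, h.1⟩, h.2⟩, ?_⟩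
  · intro a ha
    simp only [Finset.mem_Ico] at ha ⊢
    omega
  · simp only [Finset.mem_filter, Finset.mem_Ico]
    omega

lemma lab_inj {lam : List ℕ} {i j i' j' : ℕ} (h : IsBox lam i j) (h' : IsBox lam i' j')
    (he : baseLabel lam i j = baseLabel lam i' j') : i = i' ∧ j = j' := by
  have hj : j = j' := by
    rcases lt_trichotomy j j' with hc | hc | hc
    · exact absurd he (Nat.ne_of_lt (lab_lt_col h h' hc))
    · exact hc
    · exact absurd he.symm (Nat.ne_of_lt (lab_lt_col h' h hc))
  subst hj
  refine ⟨?_, rfl⟩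
  rcases lt_trichotomy i i' with hc | hc | hc
  · exact absurd he.symm (Nat.ne_of_lt (lab_lt_row h h' hc))
  · exact hc
  · exact absurd he (Nat.ne_of_lt (lab_lt_row h' h hc))

def PathT (lam : List ℕ) (m a b : ℕ) : Prop :=
  ∃ i j, IsBox lam i (j + m) ∧ baseLabel lam i j = a + 1 ∧ baseLabel lam i (j + m) = b + 1

lemma PathT_box_left {lam : List ℕ} {i j m : ℕ} (h : IsBox lam i (j + m)) : IsBox lam i j :=
  ⟨h.1, lt_of_le_of_lt (Nat.le_add_right j m) h.2⟩

lemma Xlam_apply (n : ℕ) (lam : List ℕ) (a b : Fin n) :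
    Xlam n lam a b = if PathT lam 1 (a : ℕ) (b : ℕ) then 1 else 0 := rfl

lemma Xpow_apply (n : ℕ) (lam : List ℕ) (hn : lam.sum = n) (m : ℕ) (a b : Fin n) :
    (Xlam n lam ^ (m + 1)) a b = if PathT lam (m + 1) (a : ℕ) (b : ℕ) then 1 else 0 := by
  induction m generalizing a b with
  | zero => rw [pow_one]; exact Xlam_apply n lam a b
  | succ m ih =>
    rw [pow_succ, Matrix.mul_apply]
    by_cases h : PathT lam (m + 2) (a : ℕ) (b : ℕ)
    · rw [if_pos h]
      obtain ⟨i, j, hbox, ha, hb⟩ := h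
      have hboxc : IsBox lam i (j + (m + 1)) := PathT_box_left (m := 1) hbox
      have hclt : baseLabel lam i (j + (m + 1)) - 1 < n := by
        have h1 := lab_pos hboxc
        have h2 := lab_le_n hboxc
        omega
      set cv : Fin n := ⟨baseLabel lam i (j + (m + 1)) - 1, hclt⟩ with hcv
      have hcl : baseLabel lam i (j + (m + 1)) = (cv : ℕ) + 1 := by
        have := lab_pos hboxc
        simp only [hcv]
        omega
      rw [Finset.sum_eq_single_of_mem cv (Finset.mem_univ cv)]
      · rw [ih, Xlam_apply, if_pos ⟨i, j, hboxc, ha, hcl⟩,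
          if_pos ⟨i, j + (m + 1), hbox, hcl, hb⟩, one_mul]
      · intro c _ hc
        rw [ih, Xlam_apply]
        rcases Classical.em (PathT lam (m+1) (a : ℕ) (c : ℕ)) with hp | hp
        · obtain ⟨i', j', hbox', ha', hc'⟩ := hp
          have := lab_inj (PathT_box_left hbox') (PathT_box_left hbox) (ha'.trans ha.symm)
          obtain ⟨rfl, rfl⟩ := this
          exfalso
          apply hc
          have : (c : ℕ) = (cv : ℕ) := by
            have := lab_pos hboxc
            simp only [hcv]
            omega
          exact Fin.ext this
        · rw [if_neg hp, zero_mul]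
    · rw [if_neg h]
      refine Finset.sum_eq_zero fun c _ => ?_
      rw [ih, Xlam_apply]
      rcases Classical.em (PathT lam (m+1) (a : ℕ) (c : ℕ)) with hp | hp
      · rcases Classical.em (PathT lam 1 (c : ℕ) (b : ℕ)) with hq | hq
        · exfalso
          obtain ⟨i, j, hbox, ha, hc⟩ := hp
          obtain ⟨i', j', hbox', hc', hb⟩ := hq
          have := lab_inj hbox (PathT_box_left hbox') (hc.trans hc'.symm)
          obtain ⟨rfl, hj⟩ := this
          subst hj
          exact h ⟨i, j, hbox', ha, hb⟩
        · rw [if_neg hq, mul_zero]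
      · rw [if_neg hp, zero_mul]

lemma rs_chain {n : ℕ} {lam : List ℕ} (hn : lam.sum = n) {w : Equiv.Perm (Fin n)}
    (hrs : RowStrictT n lam w) :
    ∀ (d i j : ℕ), IsBox lam i (j + d + 1) → ∀ p q : Fin n,
      (w p : ℕ) + 1 = baseLabel lam i j → (w q : ℕ) + 1 = baseLabel lam i (j + d + 1) → p < q := by
  intro d
  induction d with
  | zero => exact fun i j hbox p q hp hq => hrs i j hbox p q hp hq
  | succ d ih =>
    intro i j hbox p q hp hq
    have hboxm : IsBox lam i (j + d + 1) := PathT_box_left (m := 1) hbox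
    have h1 := lab_pos hboxm
    have h2 := lab_le_n hboxm
    set r : Fin n := ⟨baseLabel lam i (j + d + 1) - 1, by omega⟩ with hr
    have hrl : (w (w.symm r) : ℕ) + 1 = baseLabel lam i (j + d + 1) := by
      rw [Equiv.apply_symm_apply]
      simp only [hr]
      omega
    exact lt_trans (ih i j hboxm p (w.symm r) hp hrl)
      (hrs i (j + d + 1) hbox (w.symm r) q hrl hq)

lemma helper_lt {n : ℕ} {lam : List ℕ} (hn : lam.sum = n) {w : Equiv.Perm (Fin n)}
    {k ℓ : Fin n} (hinv : SpringerInvT n lam w k ℓ) {m : ℕ} {a b : Fin n}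
    (hA : PathT lam m (a : ℕ) ((w k : ℕ))) (hB : PathT lam m (b : ℕ) ((w ℓ : ℕ))) : a < b := by
  obtain ⟨hlk, ik, jk, il, jl, hbk, hbl, hlabk, hlabl, hdisj, _⟩ := hinv
  obtain ⟨i1, j1, hbox1, ha1, hk1⟩ := hA
  obtain ⟨i2, j2, hbox2, hb2, hl2⟩ := hB
  obtain ⟨hi1, hj1⟩ := lab_inj hbox1 hbk (hk1.trans hlabk.symm)
  obtain ⟨hi2, hj2⟩ := lab_inj hbox2 hbl (hl2.trans hlabl.symm)
  have hab : baseLabel lam i1 j1 < baseLabel lam i2 j2 := by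
    rcases hdisj with hc | ⟨hc, hc2⟩
    · exact lab_lt_col (PathT_box_left hbox1) (PathT_box_left hbox2) (by omega)
    · have hj12 : j1 = j2 := by omega
      subst hj12
      exact lab_lt_row (PathT_box_left hbox2) (PathT_box_left hbox1) (by omega)
  rw [Fin.lt_def]
  omega

lemma helper_norow {n : ℕ} {lam : List ℕ} (hn : lam.sum = n) {w : Equiv.Perm (Fin n)}
    (hrs : RowStrictT n lam w) {k ℓ : Fin n} (hinv : SpringerInvT n lam w k ℓ)
    {m m' : ℕ} {c : Fin n} (h1 : PathT lam m (c : ℕ) ((w ℓ : ℕ)))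
    (h2 : PathT lam m' (c : ℕ) ((w k : ℕ))) : False := by
  obtain ⟨hlk, ik, jk, il, jl, hbk, hbl, hlabk, hlabl, hdisj, _⟩ := hinv
  obtain ⟨i1, j1, hbox1, hc1, hl1⟩ := h1
  obtain ⟨i2, j2, hbox2, hc2, hk2⟩ := h2
  obtain ⟨hi12, hj12⟩ := lab_inj (PathT_box_left hbox1) (PathT_box_left hbox2) (hc1.trans hc2.symm)
  obtain ⟨hia, hja⟩ := lab_inj hbox1 hbl (hl1.trans hlabl.symm)
  obtain ⟨hib, hjb⟩ := lab_inj hbox2 hbk (hk2.trans hlabk.symm)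
  rcases hdisj with hc | ⟨hc, hc2⟩
  · -- jk < jl, same row: entries k then ℓ, contradict ℓ < k
    have hd : jl = jk + (jl - jk - 1) + 1 := by omega
    have heq : il = ik := by omega
    have hbox' : IsBox lam ik (jk + (jl - jk - 1) + 1) := by rw [← hd, ← heq]; exact hbl
    have hkl : k < ℓ := by
      refine rs_chain hn hrs (jl - jk - 1) ik jk hbox' k ℓ hlabk.symm ?_
      rw [← hd, ← heq]
      exact hlabl.symm
    exact absurd hlk (not_lt.mpr hkl.le)
  · omega

def Smat (n : ℕ) (lam : List ℕ) (w : Equiv.Perm (Fin n)) (k ℓ : Fin n) :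
    Matrix (Fin n) (Fin n) ℂ :=
  ∑ m ∈ Finset.range n,
    (Xlam n lam) ^ m * Matrix.single (w k) (w ℓ) (1 : ℂ) * ((Xlam n lam)ᵀ) ^ m

lemma triple_apply {n : ℕ} (A B : Matrix (Fin n) (Fin n) ℂ) (u v a b : Fin n) :
    (A * Matrix.single u v (1 : ℂ) * B) a b = A a u * B v b := by
  rw [Matrix.mul_apply]
  have key : ∀ c ∈ Finset.univ, (A * Matrix.single u v (1 : ℂ)) a c * B c b
      = if c = v then A a u * B v b else 0 := by
    intro c _
    by_cases hc : c = v
    · subst hc; simp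
    · simp [hc]
  rw [Finset.sum_congr rfl key]
  simp

lemma Smat_apply {n : ℕ} {lam : List ℕ} {w : Equiv.Perm (Fin n)} (k ℓ : Fin n) (a b : Fin n) :
    Smat n lam w k ℓ a b =
      ∑ m ∈ Finset.range n, (Xlam n lam ^ m) a (w k) * (Xlam n lam ^ m) b (w ℓ) := by
  rw [Smat, Matrix.sum_apply]
  refine Finset.sum_congr rfl fun m _ => ?_
  rw [triple_apply, ← Matrix.transpose_pow, Matrix.transpose_apply]

lemma Smat_paths {n : ℕ} {lam : List ℕ} (hn : lam.sum = n) {w : Equiv.Perm (Fin n)}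
    {k ℓ : Fin n} (hinv : SpringerInvT n lam w k ℓ) {a b : Fin n}
    (h : Smat n lam w k ℓ a b ≠ 0) :
    ∃ m, PathT lam m (a : ℕ) ((w k : ℕ)) ∧ PathT lam m (b : ℕ) ((w ℓ : ℕ)) := by
  rw [Smat_apply] at h
  obtain ⟨m, _, hne⟩ := Finset.exists_ne_zero_of_sum_ne_zero h
  obtain ⟨_, ik, jk, il, jl, hbk, hbl, hlabk, hlabl, _, _⟩ := hinv
  cases m with
  | zero =>
    rw [pow_zero, Matrix.one_apply, Matrix.one_apply] at hne
    have h1 : a = w k := by by_contra hh; rw [if_neg hh, zero_mul] at hne; exact hne rfl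
    have h2 : b = w ℓ := by by_contra hh; rw [if_neg hh, mul_zero] at hne; exact hne rfl
    subst h1; subst h2
    exact ⟨0, ⟨ik, jk, hbk, hlabk, hlabk⟩, ⟨il, jl, hbl, hlabl, hlabl⟩⟩
  | succ m =>
    rw [Xpow_apply n lam hn, Xpow_apply n lam hn] at hne
    have h1 : PathT lam (m + 1) (a : ℕ) ((w k : ℕ)) := by
      by_contra hh; rw [if_neg hh, zero_mul] at hne; exact hne rfl
    have h2 : PathT lam (m + 1) (b : ℕ) ((w ℓ : ℕ)) := by
      by_contra hh; rw [if_neg hh, mul_zero] at hne; exact hne rfl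
    exact ⟨m + 1, h1, h2⟩

lemma Smat_lt {n : ℕ} {lam : List ℕ} (hn : lam.sum = n) {w : Equiv.Perm (Fin n)}
    {k ℓ : Fin n} (hinv : SpringerInvT n lam w k ℓ) {a b : Fin n}
    (h : Smat n lam w k ℓ a b ≠ 0) : a < b := by
  obtain ⟨m, h1, h2⟩ := Smat_paths hn hinv h
  exact helper_lt hn hinv h1 h2

lemma Smat_mul_zero {n : ℕ} {lam : List ℕ} (hn : lam.sum = n) {w : Equiv.Perm (Fin n)}
    (hrs : RowStrictT n lam w) {k ℓ ℓ' : Fin n} (hinv : SpringerInvT n lam w k ℓ)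
    (hinv' : SpringerInvT n lam w k ℓ') :
    Smat n lam w k ℓ * Smat n lam w k ℓ' = 0 := by
  ext a b
  rw [Matrix.mul_apply, Matrix.zero_apply]
  refine Finset.sum_eq_zero fun c _ => ?_
  by_contra hne
  obtain ⟨hne1, hne2⟩ := mul_ne_zero_iff.mp hne
  obtain ⟨m, _, hp1⟩ := Smat_paths hn hinv hne1
  obtain ⟨m', hp2, _⟩ := Smat_paths hn hinv' hne2
  exact helper_norow hn hrs hinv hp1 hp2

lemma Smat_at {n : ℕ} {lam : List ℕ} (hn : lam.sum = n) {w : Equiv.Perm (Fin n)}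
    (k ℓ ℓ' : Fin n) : Smat n lam w k ℓ' (w k) (w ℓ) = if ℓ' = ℓ then 1 else 0 := by
  rw [Smat_apply]
  rw [Finset.sum_eq_single_of_mem 0 (Finset.mem_range.mpr k.pos)]
  · simp only [pow_zero, Matrix.one_apply_eq, one_mul, Matrix.one_apply]
    by_cases h : ℓ' = ℓ
    · subst h; rw [if_pos rfl, if_pos rfl]
    · rw [if_neg (fun hc => h ((w.injective hc).symm)), if_neg h]
  · intro m _ hm
    obtain ⟨m', rfl⟩ := Nat.exists_eq_succ_of_ne_zero hm
    rw [Xpow_apply n lam hn]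
    have : ¬ PathT lam (m' + 1) ((w k : ℕ)) ((w k : ℕ)) := by
      rintro ⟨i, j, hbox, ha, hb⟩
      have := (lab_inj (PathT_box_left hbox) hbox (ha.trans hb.symm)).2
      omega
    rw [if_neg this, zero_mul]

lemma BkMat_eq {n : ℕ} (lam : List ℕ) (w : Equiv.Perm (Fin n)) (k : Fin n) (x : Fin n → ℂ) :
    BkMat n lam w k x = 1 + ∑ ℓ : Fin n,
      (if SpringerInvT n lam w k ℓ then x ℓ • Smat n lam w k ℓ else 0) := rfl

lemma BkMat_apply {n : ℕ} (lam : List ℕ) (w : Equiv.Perm (Fin n)) (k : Fin n) (x : Fin n → ℂ)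
    (a b : Fin n) : BkMat n lam w k x a b = (if a = b then 1 else 0) +
      ∑ ℓ : Fin n, (if SpringerInvT n lam w k ℓ then x ℓ * Smat n lam w k ℓ a b else 0) := by
  rw [BkMat_eq, Matrix.add_apply, Matrix.sum_apply, Matrix.one_apply]
  congr 1
  refine Finset.sum_congr rfl fun ℓ _ => ?_
  split
  · rw [Matrix.smul_apply, smul_eq_mul]
  · rw [Matrix.zero_apply]

end Stmt10Aux

/-- `B_k(w)` is an abelian subgroup of the upper unipotent group `U`, of dimension
`|inv_λ^k(w)|`: each element is upper unipotent, the product of elements with coordinates `x`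
and `y` has coordinates `x + y` (so `B_k(w)` is an abelian group), and the parametrization by
coordinates supported on `inv_λ^k(w)` is injective. -/
theorem stmt10 (n : ℕ) (lam : List ℕ) (hn : lam.sum = n)
    (w : Equiv.Perm (Fin n)) (hrs : RowStrictT n lam w)
    (k : Fin n) (hk : 1 ≤ (k : ℕ)) :
    (∀ x : Fin n → ℂ, (∀ ℓ, ¬ SpringerInvT n lam w k ℓ → x ℓ = 0) →
      IsUpperUnip n (BkMat n lam w k x)) ∧
    (∀ x y : Fin n → ℂ,
      (∀ ℓ, ¬ SpringerInvT n lam w k ℓ → x ℓ = 0) →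
      (∀ ℓ, ¬ SpringerInvT n lam w k ℓ → y ℓ = 0) →
      BkMat n lam w k x * BkMat n lam w k y = BkMat n lam w k (x + y)) ∧
    (∀ x y : Fin n → ℂ,
      (∀ ℓ, ¬ SpringerInvT n lam w k ℓ → x ℓ = 0) →
      (∀ ℓ, ¬ SpringerInvT n lam w k ℓ → y ℓ = 0) →
      BkMat n lam w k x = BkMat n lam w k y → x = y) := by
  open Stmt10Aux in
  have hdiag : ∀ (z : Fin n → ℂ) (ℓ : Fin n) (a b : Fin n), ¬ a < b →
      (if SpringerInvT n lam w k ℓ then z ℓ * Smat n lam w k ℓ a b else 0) = 0 := by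
    intro z ℓ a b hab
    split
    · rename_i hinv
      have : Smat n lam w k ℓ a b = 0 := by
        by_contra hne
        exact hab (Smat_lt hn hinv hne)
      rw [this, mul_zero]
    · rfl
  refine ⟨?_, ?_, ?_⟩
  · -- upper unipotent
    intro x hx
    constructor
    · intro i
      rw [BkMat_apply, if_pos rfl, Finset.sum_eq_zero (fun ℓ _ => hdiag x ℓ i i (lt_irrefl i)),
        add_zero]
    · intro i j hji
      rw [BkMat_apply, if_neg (Fin.ne_of_gt hji),
        Finset.sum_eq_zero (fun ℓ _ => hdiag x ℓ i j (fun h => absurd hji (not_lt.mpr h.le))),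
        add_zero]
  · -- multiplication
    intro x y _ _
    rw [BkMat_eq, BkMat_eq, BkMat_eq]
    have hNN : (∑ ℓ : Fin n, (if SpringerInvT n lam w k ℓ then x ℓ • Smat n lam w k ℓ else 0)) *
        (∑ ℓ' : Fin n, (if SpringerInvT n lam w k ℓ' then y ℓ' • Smat n lam w k ℓ' else 0)) = 0 := by
      rw [Finset.sum_mul_sum]
      refine Finset.sum_eq_zero fun ℓ _ => Finset.sum_eq_zero fun ℓ' _ => ?_
      by_cases h1 : SpringerInvT n lam w k ℓ
      · by_cases h2 : SpringerInvT n lam w k ℓ'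
        · rw [if_pos h1, if_pos h2, Matrix.smul_mul, Matrix.mul_smul,
            Smat_mul_zero hn hrs h1 h2, smul_zero, smul_zero]
        · rw [if_neg h2, mul_zero]
      · rw [if_neg h1, zero_mul]
    have hsum : ∑ ℓ : Fin n, (if SpringerInvT n lam w k ℓ then (x + y) ℓ • Smat n lam w k ℓ else 0)
        = (∑ ℓ : Fin n, (if SpringerInvT n lam w k ℓ then x ℓ • Smat n lam w k ℓ else 0)) +
          (∑ ℓ : Fin n, (if SpringerInvT n lam w k ℓ then y ℓ • Smat n lam w k ℓ else 0)) := by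
      rw [← Finset.sum_add_distrib]
      refine Finset.sum_congr rfl fun ℓ _ => ?_
      split
      · rw [Pi.add_apply, add_smul]
      · rw [add_zero]
    rw [hsum, add_mul, mul_add, mul_add, one_mul, one_mul, mul_one, hNN, add_zero]
    abel
  · -- injectivity
    intro x y hx hy heq
    have key : ∀ (z : Fin n → ℂ) (ℓ : Fin n), SpringerInvT n lam w k ℓ →
        BkMat n lam w k z (w k) (w ℓ) = z ℓ := by
      intro z ℓ hinv
      have hkl : ¬ (w k = w ℓ) := fun hc => absurd (w.injective hc) (Fin.ne_of_gt hinv.1)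
      rw [BkMat_apply, if_neg hkl, zero_add,
        Finset.sum_eq_single_of_mem ℓ (Finset.mem_univ ℓ)]
      · rw [if_pos hinv, Smat_at hn, if_pos rfl, mul_one]
      · intro ℓ' _ hne
        split
        · rw [Smat_at hn, if_neg hne, mul_zero]
        · rfl
    funext ℓ
    by_cases hinv : SpringerInvT n lam w k ℓ
    · rw [← key x ℓ hinv, ← key y ℓ hinv, heq]
    · rw [hx ℓ hinv, hy ℓ hinv]
end
end

section
/- Let w ∈ S_n with R(w) row-strict, i = w(n), w = vy the canonical factorization, and λ' the composition of n−1 obtained by deleting the box of n from R(w). For each 2 ≤ k ≤ n−1, conjugation by v carries B_k(w) onto B_k(y): v⁻¹ B_k(w) v = B_k(y), where B_k(y) is the analogous subgroup for y ∈ S_{n−1}, R(y) ∈ RS(λ'), and the nilpotent X_{λ'} given by restricting v⁻¹X_λv to span{e_1,…,e_{n−1}}. -/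
open Matrix

attribute [local instance] Classical.propDecidable

noncomputable section

/-! ## Auxiliary lemmas -/

private theorem getD_set' (l : List ℕ) (i j a : ℕ) :
    (l.set i a).getD j 0 = if i = j ∧ i < l.length then a else l.getD j 0 := by
  simp only [List.getD, List.getElem?_set]
  by_cases h : i = j
  · subst h
    by_cases h2 : i < l.length
    · simp [h2]
    · simp [h2, List.set_eq_of_length_le (le_of_not_gt h2)]
  · simp [h]

private theorem sum_eq_range' (l : List ℕ) :
    l.sum = ∑ i ∈ Finset.range l.length, l.getD i 0 := by
  induction l with
  | nil => simp
  | cons a t ih => simp [Finset.sum_range_succ', ih, List.getD, add_comm]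

/-- column prefix sums -/
def colSum (lam : List ℕ) (j : ℕ) : ℕ :=
  ∑ i' ∈ Finset.range lam.length, min (lam.getD i' 0) j

private theorem colSum_mono (lam : List ℕ) {j j' : ℕ} (h : j ≤ j') :
    colSum lam j ≤ colSum lam j' :=
  Finset.sum_le_sum fun i _ => min_le_min le_rfl h

private theorem colSum_succ (lam : List ℕ) (j : ℕ) :
    colSum lam (j+1) = colSum lam j +
      ∑ i' ∈ Finset.range lam.length, (if j < lam.getD i' 0 then 1 else 0) := by
  rw [colSum, colSum, ← Finset.sum_add_distrib]
  refine Finset.sum_congr rfl fun i _ => ?_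
  rcases lt_or_ge j (lam.getD i 0) with h | h
  · rw [min_eq_right h, min_eq_right (by omega), if_pos h]
  · rw [min_eq_left h, min_eq_left (by omega), if_neg (by omega), Nat.add_zero]

private theorem mem_filter_Ico {lam : List ℕ} {i j : ℕ} (hb : IsBox lam i j) :
    i ∈ (Finset.Ico i lam.length).filter (fun i' => j < lam.getD i' 0) := by
  rw [Finset.mem_filter, Finset.mem_Ico]
  exact ⟨⟨le_rfl, hb.1⟩, hb.2⟩

private theorem label_gt (lam : List ℕ) {i j : ℕ} (hb : IsBox lam i j) :
    colSum lam j < baseLabel lam i j := by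
  have : 0 < ((Finset.Ico i lam.length).filter (fun i' => j < lam.getD i' 0)).card :=
    Finset.card_pos.mpr ⟨i, mem_filter_Ico hb⟩
  unfold baseLabel colSum
  omega

private theorem label_le (lam : List ℕ) (i j : ℕ) :
    baseLabel lam i j ≤ colSum lam (j+1) := by
  rw [colSum_succ]
  unfold baseLabel colSum
  have hcard : ((Finset.Ico i lam.length).filter (fun i' => j < lam.getD i' 0)).card ≤
      ∑ i' ∈ Finset.range lam.length, (if j < lam.getD i' 0 then 1 else 0) := by
    rw [Finset.card_filter]
    exact Finset.sum_le_sum_of_subset (fun a ha => by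
      rw [Finset.mem_Ico] at ha; exact Finset.mem_range.mpr ha.2)
  omega

private theorem label_le_sum (lam : List ℕ) (i j : ℕ) :
    baseLabel lam i j ≤ lam.sum := by
  refine le_trans (label_le lam i j) ?_
  rw [sum_eq_range']
  exact Finset.sum_le_sum fun i _ => min_le_left _ _

private theorem label_lt_col (lam : List ℕ) {i i' j : ℕ} (hb : IsBox lam i j)
    (hb' : IsBox lam i' j) (h : i < i') : baseLabel lam i' j < baseLabel lam i j := by
  unfold baseLabel
  have hss : (Finset.Ico i' lam.length).filter (fun i'' => j < lam.getD i'' 0) ⊂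
      (Finset.Ico i lam.length).filter (fun i'' => j < lam.getD i'' 0) := by
    refine Finset.ssubset_iff_of_subset (Finset.filter_subset_filter _ ?_) |>.mpr
      ⟨i, mem_filter_Ico hb, ?_⟩
    · exact Finset.Ico_subset_Ico (le_of_lt h) le_rfl
    · rw [Finset.mem_filter, Finset.mem_Ico]
      rintro ⟨⟨h1, -⟩, -⟩; omega
  have := Finset.card_lt_card hss
  omega

private theorem label_lt_of_col_lt (lam : List ℕ) {i i' j j' : ℕ}
    (hb' : IsBox lam i' j') (h : j < j') : baseLabel lam i j < baseLabel lam i' j' :=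
  lt_of_le_of_lt (le_trans (label_le lam i j) (colSum_mono lam h)) (label_gt lam hb')

private theorem label_inj (lam : List ℕ) {i j i' j' : ℕ} (hb : IsBox lam i j)
    (hb' : IsBox lam i' j') (h : baseLabel lam i j = baseLabel lam i' j') :
    i = i' ∧ j = j' := by
  rcases lt_trichotomy j j' with hj | hj | hj
  · exact absurd h (ne_of_lt (label_lt_of_col_lt lam hb' hj))
  · subst hj
    rcases lt_trichotomy i i' with hi | hi | hi
    · exact absurd h.symm (ne_of_lt (label_lt_col lam hb hb' hi))
    · exact ⟨hi, rfl⟩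
    · exact absurd h (ne_of_lt (label_lt_col lam hb' hb hi))
  · exact absurd h.symm (ne_of_lt (label_lt_of_col_lt lam hb hj))

private theorem label_gt_iff (lam : List ℕ) {i j i0 j0 : ℕ} (hb : IsBox lam i j)
    (hb0 : IsBox lam i0 j0) :
    baseLabel lam i0 j0 < baseLabel lam i j ↔ (j0 < j ∨ (j0 = j ∧ i < i0)) := by
  constructor
  · intro h
    rcases lt_trichotomy j0 j with hj | hj | hj
    · exact Or.inl hj
    · subst hj
      rcases lt_trichotomy i i0 with hi | hi | hi
      · exact Or.inr ⟨rfl, hi⟩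
      · subst hi; omega
      · exact absurd h (by have := label_lt_col lam hb0 hb hi; omega)
    · exact absurd h (by have := label_lt_of_col_lt lam (i := i) hb0 hj; omega)
  · rintro (hj | ⟨hj, hi⟩)
    · exact label_lt_of_col_lt lam hb hj
    · subst hj; exact label_lt_col lam hb hb0 hi
section SetLemmas

variable {lam : List ℕ} {i0 j0 : ℕ}

private theorem isBox_set_iff (hi0 : i0 < lam.length) (hrow : lam.getD i0 0 = j0 + 1)
    {i j : ℕ} : IsBox (lam.set i0 j0) i j ↔ IsBox lam i j ∧ ¬(i = i0 ∧ j = j0) := by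
  unfold IsBox
  rw [List.length_set, getD_set']
  by_cases h : i0 = i
  · subst h
    rw [if_pos ⟨rfl, hi0⟩, hrow]
    omega
  · rw [if_neg (fun hc : i0 = i ∧ _ => h hc.1)]
    have : ¬(i = i0 ∧ j = j0) := fun hc => h hc.1.symm
    tauto

private theorem colSum_set (hi0 : i0 < lam.length) (hrow : lam.getD i0 0 = j0 + 1)
    (j : ℕ) : colSum lam j = colSum (lam.set i0 j0) j + (if j0 < j then 1 else 0) := by
  have hmem : i0 ∈ Finset.range lam.length := Finset.mem_range.mpr hi0
  unfold colSum
  rw [List.length_set, ← Finset.add_sum_erase _ _ hmem, ← Finset.add_sum_erase _ _ hmem]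
  have hcongr : ∑ i' ∈ (Finset.range lam.length).erase i0, min (lam.getD i' 0) j =
      ∑ i' ∈ (Finset.range lam.length).erase i0, min ((lam.set i0 j0).getD i' 0) j := by
    refine Finset.sum_congr rfl fun a ha => ?_
    rw [getD_set', if_neg (show ¬(i0 = a ∧ i0 < lam.length) from
      fun hc => (Finset.mem_erase.mp ha).1 hc.1.symm)]
  rw [← hcongr, getD_set', if_pos ⟨rfl, hi0⟩, hrow]
  simp only [Nat.min_def]
  split_ifs <;> omega

private theorem card_set (hi0 : i0 < lam.length) (hrow : lam.getD i0 0 = j0 + 1)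
    (i j : ℕ) :
    ((Finset.Ico i lam.length).filter (fun i' => j < lam.getD i' 0)).card =
      ((Finset.Ico i (lam.set i0 j0).length).filter
          (fun i' => j < (lam.set i0 j0).getD i' 0)).card +
        (if j = j0 ∧ i ≤ i0 then 1 else 0) := by
  rw [List.length_set, Finset.card_filter, Finset.card_filter]
  by_cases hmem : i ≤ i0
  · have hm : i0 ∈ Finset.Ico i lam.length := Finset.mem_Ico.mpr ⟨hmem, hi0⟩
    rw [← Finset.add_sum_erase _ _ hm, ← Finset.add_sum_erase _ _ hm]
    have hcongr : ∑ i' ∈ (Finset.Ico i lam.length).erase i0,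
          (if j < lam.getD i' 0 then 1 else 0) =
        ∑ i' ∈ (Finset.Ico i lam.length).erase i0,
          (if j < (lam.set i0 j0).getD i' 0 then 1 else 0) := by
      refine Finset.sum_congr rfl fun a ha => ?_
      rw [getD_set', if_neg (show ¬(i0 = a ∧ i0 < lam.length) from
        fun hc => (Finset.mem_erase.mp ha).1 hc.1.symm)]
    rw [← hcongr, getD_set', if_pos (show i0 = i0 ∧ i0 < lam.length from ⟨rfl, hi0⟩), hrow]
    have heq : (if j = j0 ∧ i ≤ i0 then 1 else 0) = (if j = j0 then (1:ℕ) else 0) := by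
      simp [hmem]
    rw [heq]
    split_ifs <;> omega
  · rw [if_neg (fun hc => hmem hc.2), Nat.add_zero]
    refine Finset.sum_congr rfl fun a ha => ?_
    rw [getD_set', if_neg (show ¬(i0 = a ∧ i0 < lam.length) from ?_)]
    rintro ⟨rfl, -⟩
    exact hmem (Finset.mem_Ico.mp ha).1

private theorem baseLabel_set (hi0 : i0 < lam.length) (hrow : lam.getD i0 0 = j0 + 1)
    (i j : ℕ) :
    baseLabel lam i j = baseLabel (lam.set i0 j0) i j +
      (if j0 < j ∨ (j = j0 ∧ i ≤ i0) then 1 else 0) := by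
  unfold baseLabel
  have h1 := colSum_set hi0 hrow j
  have h2 := card_set hi0 hrow i j
  unfold colSum at h1
  rw [List.length_set] at h1 h2 ⊢
  split_ifs at * <;> omega

private theorem baseLabel_set_gt (hbox : IsBox lam i0 j0) (hrow : lam.getD i0 0 = j0 + 1)
    {i j : ℕ} (hb' : IsBox (lam.set i0 j0) i j) :
    baseLabel lam i j = baseLabel (lam.set i0 j0) i j +
      (if baseLabel lam i0 j0 < baseLabel lam i j then 1 else 0) := by
  obtain ⟨hb, hne⟩ := (isBox_set_iff hbox.1 hrow).mp hb'
  have h2 : (baseLabel lam i0 j0 < baseLabel lam i j) ↔ (j0 < j ∨ (j = j0 ∧ i ≤ i0)) := by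
    rw [label_gt_iff lam hb hbox]
    constructor
    · rintro (h | ⟨h1, h3⟩)
      · exact Or.inl h
      · exact Or.inr ⟨h1.symm, le_of_lt h3⟩
    · rintro (h | ⟨h1, h3⟩)
      · exact Or.inl h
      · exact Or.inr ⟨h1.symm, lt_of_le_of_ne h3 (fun hc => hne ⟨hc, h1⟩)⟩
  rw [if_congr h2 rfl rfl]
  exact baseLabel_set hbox.1 hrow i j

private theorem baseLabel_set_ne (hbox : IsBox lam i0 j0) (hrow : lam.getD i0 0 = j0 + 1)
    {i j : ℕ} (hb' : IsBox (lam.set i0 j0) i j) :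
    baseLabel lam i j ≠ baseLabel lam i0 j0 := by
  obtain ⟨hb, hne⟩ := (isBox_set_iff hbox.1 hrow).mp hb'
  intro hc
  exact hne ⟨(label_inj lam hb hbox hc).1, (label_inj lam hb hbox hc).2⟩

private theorem baseLabel_set_le (hbox : IsBox lam i0 j0) (hrow : lam.getD i0 0 = j0 + 1)
    {i j : ℕ} (hb' : IsBox (lam.set i0 j0) i j) :
    baseLabel (lam.set i0 j0) i j + 1 ≤ lam.sum := by
  have h1 := baseLabel_set_gt hbox hrow hb'
  have h2 := label_le_sum lam i j
  have h3 := baseLabel_set_ne hbox hrow hb'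
  have h4 := label_le_sum lam i0 j0
  have h5 := label_gt lam hbox
  split_ifs at h1 with h6 <;> omega

end SetLemmas
section VPerm

private theorem vPerm_apply (n : ℕ) : ∀ m i, n - i = m → i ≤ n → ∀ p : Fin (n+1),
    ((vPerm n i p : ℕ)) = if (p:ℕ) < i then (p:ℕ) else if (p:ℕ) = n then i else (p:ℕ)+1 := by
  intro m
  induction m with
  | zero =>
    intro i hm hi p
    have hin : i = n := by omega
    have h0 : vPerm n i = 1 := by
      unfold vPerm
      rw [hin, List.Ico.self_empty]
      simp
    rw [h0]
    have hple : (p:ℕ) ≤ n := by omega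
    simp only [Equiv.Perm.one_apply]
    split_ifs with h1 h2
    · rfl
    · omega
    · omega
  | succ m ih =>
    intro i hm hi p
    have hin : i < n := by omega
    have hstep : vPerm n i = Equiv.swap (Fin.ofNat (n+1) i) (Fin.ofNat (n+1) ((i:ℕ)+1 : ℕ)) *
        vPerm n (i+1) := by
      unfold vPerm
      rw [List.Ico.eq_cons hin, List.map_cons, List.prod_cons]
    have hiv : ((Fin.ofNat (n+1) i : Fin (n+1)) : ℕ) = i := by
      rw [Fin.val_ofNat]; exact Nat.mod_eq_of_lt (by omega)
    have hiv1 : ((Fin.ofNat (n+1) ((i:ℕ)+1 : ℕ) : Fin (n+1)) : ℕ) = i + 1 := by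
      rw [Fin.val_ofNat]; exact Nat.mod_eq_of_lt (by omega)
    have hq := ih (i+1) (by omega) (by omega) p
    set q := vPerm n (i+1) p with hqdef
    rw [hstep, Equiv.Perm.mul_apply, ← hqdef]
    rcases lt_trichotomy (p:ℕ) i with hp | hp | hp
    · have hqv : (q:ℕ) = (p:ℕ) := by rw [hq, if_pos (by omega)]
      rw [Equiv.swap_apply_of_ne_of_ne
        (fun hc => by rw [hc] at hqv; omega)
        (fun hc => by rw [hc] at hqv; omega)]
      rw [hqv, if_pos hp]
    · have hqv : (q:ℕ) = (p:ℕ) := by rw [hq, if_pos (by omega)]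
      have : q = Fin.ofNat (n+1) i := Fin.ext (by rw [hiv]; omega)
      rw [this, Equiv.swap_apply_left, hiv1, if_neg (by omega), if_neg (by omega)]
      omega
    · rcases eq_or_lt_of_le (Nat.lt_succ_iff.mp p.isLt) with hpn | hpn
      · have hqv : (q:ℕ) = i + 1 := by rw [hq, if_neg (by omega), if_pos hpn]
        have : q = Fin.ofNat (n+1) ((i:ℕ)+1 : ℕ) := Fin.ext (by rw [hiv1]; omega)
        rw [this, Equiv.swap_apply_right, hiv, if_neg (by omega), if_pos hpn]
      · have hqv : (q:ℕ) = (p:ℕ) + 1 := by rw [hq, if_neg (by omega), if_neg (by omega)]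
        rw [Equiv.swap_apply_of_ne_of_ne
          (fun hc => by rw [hc] at hqv; omega)
          (fun hc => by rw [hc] at hqv; omega)]
        rw [hqv, if_neg (by omega), if_neg (by omega)]

end VPerm
section MatLemmas

variable {N : ℕ}

private theorem permMat_mul (σ τ : Equiv.Perm (Fin N)) :
    permMat N σ * permMat N τ = permMat N (σ * τ) := by
  ext a b
  simp only [permMat, Matrix.mul_apply, Equiv.Perm.mul_apply]
  rw [Finset.sum_congr rfl (fun c _ => show
      (if σ c = a then (1:ℂ) else 0) * (if τ b = c then 1 else 0) =
      (if τ b = c then (if σ c = a then (1:ℂ) else 0) else 0) by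
    split_ifs <;> simp)]
  rw [Finset.sum_ite_eq]
  simp
  congr

private theorem permMat_one : permMat N 1 = (1 : Matrix (Fin N) (Fin N) ℂ) := by
  ext a b
  simp only [permMat, Equiv.Perm.one_apply, Matrix.one_apply]
  by_cases h : a = b <;> simp [h, eq_comm]

private theorem conjM_entry (σ : Equiv.Perm (Fin N)) (M : Matrix (Fin N) (Fin N) ℂ)
    (b c : Fin N) : (permMat N σ⁻¹ * M * permMat N σ) b c = M (σ b) (σ c) := by
  have key : ∀ d, (∑ e, M d e * (if σ c = e then (1:ℂ) else 0)) = M d (σ c) := fun d => by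
    rw [Finset.sum_congr rfl (fun e _ => show
        M d e * (if σ c = e then (1:ℂ) else 0) = if σ c = e then M d e else 0 by
      split_ifs <;> simp)]
    rw [Finset.sum_ite_eq]
    simp
  rw [Matrix.mul_assoc]
  simp only [Matrix.mul_apply, permMat]
  rw [Finset.sum_congr rfl (fun d _ => show
      (if σ⁻¹ d = b then (1:ℂ) else 0) * (∑ e, M d e * (if σ c = e then (1:ℂ) else 0)) =
      (if d = σ b then M d (σ c) else 0) by
    rw [key d]
    by_cases h : d = σ b
    · rw [if_pos h, if_pos (show σ⁻¹ d = b by rw [h]; simp), one_mul]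
    · rw [if_neg h, if_neg (show ¬ σ⁻¹ d = b from fun hc => h (by rw [← hc]; simp)), zero_mul])]
  rw [Finset.sum_ite_eq']
  simp

private theorem conjM_mul (σ : Equiv.Perm (Fin N)) (M M' : Matrix (Fin N) (Fin N) ℂ) :
    permMat N σ⁻¹ * (M * M') * permMat N σ =
      (permMat N σ⁻¹ * M * permMat N σ) * (permMat N σ⁻¹ * M' * permMat N σ) := by
  have h1 : permMat N σ * (permMat N σ⁻¹) = 1 := by
    rw [permMat_mul, mul_inv_cancel]
    exact permMat_one
  calc permMat N σ⁻¹ * (M * M') * permMat N σ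
      = permMat N σ⁻¹ * M * (permMat N σ * permMat N σ⁻¹) * M' * permMat N σ := by
        rw [h1]; noncomm_ring
    _ = (permMat N σ⁻¹ * M * permMat N σ) * (permMat N σ⁻¹ * M' * permMat N σ) := by
        noncomm_ring

private theorem conjM_pow (σ : Equiv.Perm (Fin N)) (M : Matrix (Fin N) (Fin N) ℂ) (m : ℕ) :
    permMat N σ⁻¹ * (M ^ m) * permMat N σ = (permMat N σ⁻¹ * M * permMat N σ) ^ m := by
  induction m with
  | zero =>
    simp only [pow_zero, mul_one]
    rw [permMat_mul, inv_mul_cancel]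
    exact permMat_one
  | succ m ih =>
    rw [pow_succ, pow_succ, conjM_mul, ih]

private theorem pow_agree {A B : Matrix (Fin (N+1)) (Fin (N+1)) ℂ}
    (hrowA : ∀ c, A (Fin.last N) c = 0) (hrowB : ∀ c, B (Fin.last N) c = 0)
    (hcol : ∀ b c, c ≠ Fin.last N → A b c = B b c) (m : ℕ) :
    (∀ p, p ≠ Fin.last N → ∀ b, (A ^ m) b p = (B ^ m) b p) ∧
    (∀ p, p ≠ Fin.last N → (A ^ m) (Fin.last N) p = 0 ∧ (B ^ m) (Fin.last N) p = 0) := by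
  induction m with
  | zero =>
    refine ⟨fun p hp b => rfl, fun p hp => ?_⟩
    rw [pow_zero]
    constructor <;> simp [Matrix.one_apply, Ne.symm hp]
  | succ m ih =>
    constructor
    · intro p hp b
      rw [pow_succ', pow_succ', Matrix.mul_apply, Matrix.mul_apply]
      refine Finset.sum_congr rfl fun c _ => ?_
      by_cases hc : c = Fin.last N
      · subst hc
        rw [(ih.2 p hp).1, (ih.2 p hp).2, mul_zero, mul_zero]
      · rw [ih.1 p hp c, hcol b c hc]
    · intro p hp
      rw [pow_succ', pow_succ', Matrix.mul_apply, Matrix.mul_apply]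
      constructor
      · exact Finset.sum_eq_zero fun c _ => by rw [hrowA c, zero_mul]
      · exact Finset.sum_eq_zero fun c _ => by rw [hrowB c, zero_mul]

end MatLemmas
section MatLemmas2

variable {N : ℕ}

private theorem conjM_transpose (σ : Equiv.Perm (Fin N)) (M : Matrix (Fin N) (Fin N) ℂ) :
    permMat N σ⁻¹ * Mᵀ * permMat N σ = (permMat N σ⁻¹ * M * permMat N σ)ᵀ := by
  ext b c
  rw [Matrix.transpose_apply, conjM_entry, conjM_entry, Matrix.transpose_apply]

private theorem sandwich_entry (M : Matrix (Fin N) (Fin N) ℂ) (p q b c : Fin N) :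
    (M * Matrix.single p q (1:ℂ) * Mᵀ) b c = M b p * M c q := by
  have inner : ∀ d, (M * Matrix.single p q (1:ℂ)) b d =
      if q = d then M b p else 0 := by
    intro d
    simp only [Matrix.mul_apply, Matrix.single, Matrix.of_apply]
    rw [Finset.sum_congr rfl (fun e _ => show
        M b e * (if p = e ∧ q = d then (1:ℂ) else 0) =
          (if p = e then (if q = d then M b e else 0) else 0) by
      split_ifs <;> simp_all)]
    rw [Finset.sum_ite_eq]
    simp
  rw [Matrix.mul_apply]
  simp only [Matrix.transpose_apply]
  rw [Finset.sum_congr rfl (fun d _ => show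
      (M * Matrix.single p q (1:ℂ)) b d * M c d =
        (if q = d then M b p * M c d else 0) by
    rw [inner d]
    split_ifs <;> simp)]
  rw [Finset.sum_ite_eq]
  simp

end MatLemmas2

/-- for `2 ≤ k ≤ n-1`, conjugation by `v` carries `B_k(w)` onto `B_k(y)`:
`v⁻¹ B_k(w) v = B_k(y)`, where `y = v⁻¹w` and `B_k(y)` is the analogous subgroup for the shape
`λ'` obtained by deleting the box of the largest entry of `R(w)`. -/
theorem stmt14 (n : ℕ) (lam : List ℕ) (hn : lam.sum = n + 1)
    (w v y : Equiv.Perm (Fin (n+1)))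
    (hv : v = vPerm n (w (Fin.last n) : ℕ)) (hy : y = v⁻¹ * w)
    (hrs : RowStrictT (n+1) lam w)
    (i0 j0 : ℕ) (hbox : IsBox lam i0 j0)
    (hlab : baseLabel lam i0 j0 = (w (Fin.last n) : ℕ) + 1)
    (lam' : List ℕ) (hlam' : lam' = lam.set i0 (lam.getD i0 0 - 1))
    (k : Fin (n+1)) (hk : 1 ≤ (k : ℕ)) (hkn : (k : ℕ) < n) :
    {M : Matrix (Fin (n+1)) (Fin (n+1)) ℂ |
      ∃ x : Fin (n+1) → ℂ, (∀ ℓ, ¬ SpringerInvT (n+1) lam w k ℓ → x ℓ = 0) ∧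
        M = permMat (n+1) v⁻¹ * BkMat (n+1) lam w k x * permMat (n+1) v} =
    {M : Matrix (Fin (n+1)) (Fin (n+1)) ℂ |
      ∃ x : Fin (n+1) → ℂ, (∀ ℓ, ¬ SpringerInvT (n+1) lam' y k ℓ → x ℓ = 0) ∧
        M = BkMat (n+1) lam' y k x} := by
  -- basic notation
  set iw : ℕ := ((w (Fin.last n) : Fin (n+1)) : ℕ) with hiw
  have hiwn : iw ≤ n := Nat.lt_succ_iff.mp (w (Fin.last n)).isLt
  -- no box to the right of (i0, j0)
  have hnotbox : ¬ IsBox lam i0 (j0+1) := by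
    intro hb1
    have hble := label_le_sum lam i0 (j0+1)
    rw [hn] at hble
    have hbge := label_gt lam hb1
    set q : Fin (n+1) := ⟨baseLabel lam i0 (j0+1) - 1, by omega⟩ with hq
    have hq1 : (w (w.symm q) : ℕ) + 1 = baseLabel lam i0 (j0+1) := by
      rw [Equiv.apply_symm_apply, hq]
      simp
      omega
    have := hrs i0 j0 hb1 (Fin.last n) (w.symm q) hlab.symm hq1
    exact absurd this (not_lt.mpr (Fin.le_last _))
  have hrow : lam.getD i0 0 = j0 + 1 := by
    unfold IsBox at hnotbox
    have h1 := hbox.1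
    have h2 := hbox.2
    omega
  have hset : lam' = lam.set i0 j0 := by rw [hlam', hrow]; simp
  subst hset
  -- values of v
  have hvlast : ((v (Fin.last n)) : ℕ) = iw := by
    rw [hv, vPerm_apply n (n - iw) iw rfl hiwn, if_neg (by simp; omega), if_pos (by simp)]
  have hvp : ∀ p : Fin (n+1), p ≠ Fin.last n →
      ((v p : ℕ)) = if (p:ℕ) < iw then (p:ℕ) else (p:ℕ)+1 := by
    intro p hp
    have hpn : (p:ℕ) ≠ n := by
      intro h
      exact hp (Fin.ext (by simp [h]))
    have hpn' : ¬ ((p:ℕ) = n) := hpn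
    rw [hv, vPerm_apply n (n - iw) iw rfl hiwn, if_neg hpn']
  have hwv : ∀ p, w p = v (y p) := by
    intro p
    rw [hy]
    simp
  have hylast : y (Fin.last n) = Fin.last n := by
    rw [hy, Equiv.Perm.mul_apply]
    have : w (Fin.last n) = v (Fin.last n) := Fin.ext (by rw [hvlast])
    rw [this]
    simp
  have hyne : ∀ r : Fin (n+1), r ≠ Fin.last n → y r ≠ Fin.last n := by
    intro r hr hc
    exact hr (y.injective (hc.trans hylast.symm))
  have hklast : k ≠ Fin.last n := by
    intro h
    rw [h] at hkn
    exact absurd hkn (by simp)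
  -- label correspondence
  have hcorr : ∀ i j, IsBox (lam.set i0 j0) i j → ∀ p : Fin (n+1), p ≠ Fin.last n →
      (baseLabel (lam.set i0 j0) i j = (p:ℕ)+1 ↔ baseLabel lam i j = ((v p : ℕ))+1) := by
    intro i j hb' p hp
    have hvpv := hvp p hp
    have hgt := baseLabel_set_gt hbox hrow hb'
    have hne := baseLabel_set_ne hbox hrow hb'
    rw [hlab] at hgt hne
    rw [hvpv]
    have hple : (p : ℕ) ≤ n := Nat.lt_succ_iff.mp p.isLt
    split_ifs at hgt ⊢ <;> omega
  have hlabn : ∀ i j, IsBox (lam.set i0 j0) i j → baseLabel (lam.set i0 j0) i j ≤ n := by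
    intro i j hb'
    have := baseLabel_set_le hbox hrow hb'
    omega
  have hL0box : ∀ i j, IsBox lam i j → baseLabel lam i j = iw + 1 → i = i0 ∧ j = j0 := by
    intro i j hb heq
    exact label_inj lam hb hbox (by rw [heq, hlab])
  have hboxstep : ∀ (L : List ℕ) i j, IsBox L i (j+1) → IsBox L i j := by
    intro L i j h
    exact ⟨h.1, by have := h.2; omega⟩
  -- matrices
  set X := Xlam (n+1) lam with hX
  set A := Xlam (n+1) (lam.set i0 j0) with hA
  set P := permMat (n+1) v with hP
  set Pi := permMat (n+1) v⁻¹ with hPi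
  set Z := Pi * X * P with hZdef
  have hZ : ∀ b c, Z b c = X (v b) (v c) := fun b c => conjM_entry v X b c
  have hXrow : ∀ d : Fin (n+1), (d:ℕ) = iw → ∀ c, X d c = 0 := by
    intro d hd c
    rw [hX]
    simp only [Xlam]
    rw [if_neg]
    rintro ⟨i, j, hb1, hl1, hl2⟩
    rw [hd] at hl1
    obtain ⟨rfl, rfl⟩ := hL0box i j (hboxstep lam i j hb1) hl1
    exact hnotbox hb1
  have hZrow : ∀ c, Z (Fin.last n) c = 0 := by
    intro c
    rw [hZ]
    exact hXrow (v (Fin.last n)) hvlast (v c)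
  have hArow : ∀ c, A (Fin.last n) c = 0 := by
    intro c
    rw [hA]
    simp only [Xlam]
    rw [if_neg]
    rintro ⟨i, j, hb1, hl1, hl2⟩
    have := hlabn i j (hboxstep _ i j hb1)
    rw [hl1] at this
    simp only [Fin.val_last] at this
    omega
  have hne_of_v : ∀ p : Fin (n+1), p ≠ Fin.last n → (v p : ℕ) ≠ iw := by
    intro p hp hc
    exact hp (v.injective (Fin.ext (by rw [hc, hvlast])))
  have hcolZA : ∀ b c, c ≠ Fin.last n → Z b c = A b c := by
    intro b c hc
    by_cases hb : b = Fin.last n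
    · subst hb
      rw [hZrow c, hArow c]
    · rw [hZ, hX, hA]
      simp only [Xlam]
      refine if_congr ?_ rfl rfl
      constructor
      · rintro ⟨i, j, hb1, hl1, hl2⟩
        have hbj : IsBox lam i j := hboxstep lam i j hb1
        have hne1 : ¬(i = i0 ∧ j = j0) := by
          rintro ⟨rfl, rfl⟩
          rw [hlab] at hl1
          exact hne_of_v b hb (by omega)
        have hne2 : ¬(i = i0 ∧ j + 1 = j0) := by
          rintro ⟨rfl, h2⟩
          rw [← h2] at hlab
          rw [hlab] at hl2
          exact hne_of_v c hc (by omega)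
        refine ⟨i, j, (isBox_set_iff hbox.1 hrow).mpr ⟨hb1, hne2⟩, ?_, ?_⟩
        · exact (hcorr i j ((isBox_set_iff hbox.1 hrow).mpr ⟨hbj, hne1⟩) b hb).mpr hl1
        · exact (hcorr i (j+1) ((isBox_set_iff hbox.1 hrow).mpr ⟨hb1, hne2⟩) c hc).mpr hl2
      · rintro ⟨i, j, hb1, hl1, hl2⟩
        have hbj : IsBox (lam.set i0 j0) i j := hboxstep _ i j hb1
        refine ⟨i, j, ((isBox_set_iff hbox.1 hrow).mp hb1).1, ?_, ?_⟩
        · exact (hcorr i j hbj b hb).mp hl1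
        · exact (hcorr i (j+1) hb1 c hc).mp hl2
  have hpa := pow_agree hZrow hArow hcolZA
  -- Springer inversion equivalence
  have hSpr : ∀ ℓ : Fin (n+1), SpringerInvT (n+1) lam w k ℓ ↔
      SpringerInvT (n+1) (lam.set i0 j0) y k ℓ := by
    intro ℓ
    simp only [SpringerInvT, HessInvT]
    constructor
    · rintro ⟨hlk, ik, jk, il, jl, hbk, hbl, hlbk, hlbl, hord, hlast⟩
      have hllast : ℓ ≠ Fin.last n := by
        intro h
        rw [h, Fin.lt_def] at hlk
        simp only [Fin.val_last] at hlk
        omega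
      have hwk : (w k : ℕ) ≠ iw := fun hc => hklast (w.injective (Fin.ext hc))
      have hwl : (w ℓ : ℕ) ≠ iw := fun hc => hllast (w.injective (Fin.ext hc))
      have hnek : ¬(ik = i0 ∧ jk = j0) := by
        rintro ⟨rfl, rfl⟩
        rw [hlab] at hlbk
        omega
      have hnel : ¬(il = i0 ∧ jl = j0) := by
        rintro ⟨rfl, rfl⟩
        rw [hlab] at hlbl
        omega
      have hbk' := (isBox_set_iff hbox.1 hrow).mpr ⟨hbk, hnek⟩
      have hbl' := (isBox_set_iff hbox.1 hrow).mpr ⟨hbl, hnel⟩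
      refine ⟨hlk, ik, jk, il, jl, hbk', hbl', ?_, ?_, hord, ?_⟩
      · refine (hcorr ik jk hbk' (y k) (hyne k hklast)).mpr ?_
        rw [hlbk, hwv k]
      · refine (hcorr il jl hbl' (y ℓ) (hyne ℓ hllast)).mpr ?_
        rw [hlbl, hwv ℓ]
      · intro r hbr hlr
        by_cases hr : r = Fin.last n
        · exfalso
          have h1 := hlabn il (jl+1) hbr
          rw [← hlr, hr, hylast] at h1
          simp only [Fin.val_last] at h1
          omega
        · have h2 : baseLabel (lam.set i0 j0) il (jl+1) = ((y r : Fin (n+1)) : ℕ) + 1 :=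
            hlr.symm
          have h3 := (hcorr il (jl+1) hbr (y r) (hyne r hr)).mp h2
          rw [← hwv r] at h3
          exact hlast r ((isBox_set_iff hbox.1 hrow).mp hbr).1 h3.symm
    · rintro ⟨hlk, ik, jk, il, jl, hbk, hbl, hlbk, hlbl, hord, hlast⟩
      have hllast : ℓ ≠ Fin.last n := by
        intro h
        rw [h, Fin.lt_def] at hlk
        simp only [Fin.val_last] at hlk
        omega
      obtain ⟨hbkl, hnek⟩ := (isBox_set_iff hbox.1 hrow).mp hbk
      obtain ⟨hbll, hnel⟩ := (isBox_set_iff hbox.1 hrow).mp hbl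
      refine ⟨hlk, ik, jk, il, jl, hbkl, hbll, ?_, ?_, hord, ?_⟩
      · have := (hcorr ik jk hbk (y k) (hyne k hklast)).mp hlbk
        rw [← hwv k] at this
        exact this
      · have := (hcorr il jl hbl (y ℓ) (hyne ℓ hllast)).mp hlbl
        rw [← hwv ℓ] at this
        exact this
      · intro r hbr hlr
        by_cases hcase : il = i0 ∧ jl + 1 = j0
        · have hlvl : baseLabel lam il (jl+1) = iw + 1 := by
            rw [hcase.1, hcase.2, hlab]
          rw [← hlr] at hlvl
          have hrl : r = Fin.last n := w.injective (Fin.ext (by omega))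
          rw [hrl]
          simp only [Fin.val_last]
          omega
        · have hbr' : IsBox (lam.set i0 j0) il (jl+1) :=
            (isBox_set_iff hbox.1 hrow).mpr ⟨hbr, hcase⟩
          have hr : r ≠ Fin.last n := by
            intro h
            rw [h] at hlr
            have : baseLabel lam il (jl+1) = iw + 1 := by rw [← hlr]
            exact hcase (hL0box il (jl+1) hbr this)
          have h3 : baseLabel lam il (jl+1) = ((v (y r) : Fin (n+1)) : ℕ) + 1 := by
            rw [← hwv r, ← hlr]
          have h4 := (hcorr il (jl+1) hbr' (y r) (hyne r hr)).mpr h3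
          exact hlast r hbr' h4.symm
  -- conjugation carries BkMat to BkMat
  have hBk : ∀ x : Fin (n+1) → ℂ,
      Pi * BkMat (n+1) lam w k x * P = BkMat (n+1) (lam.set i0 j0) y k x := by
    intro x
    unfold BkMat
    rw [mul_add, add_mul, mul_one]
    have hPiP : Pi * P = 1 := by
      rw [hPi, hP, permMat_mul, inv_mul_cancel]
      exact permMat_one
    rw [hPiP, Finset.mul_sum, Finset.sum_mul]
    congr 1
    refine Finset.sum_congr rfl fun ℓ _ => ?_
    by_cases hS : SpringerInvT (n+1) lam w k ℓ
    · rw [if_pos hS, if_pos ((hSpr ℓ).mp hS)]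
      rw [Matrix.mul_smul, Matrix.smul_mul]
      congr 1
      rw [Finset.mul_sum, Finset.sum_mul]
      refine Finset.sum_congr rfl fun m _ => ?_
      have hEq : Pi * Matrix.single (w k) (w ℓ) (1:ℂ) * P =
          Matrix.single (y k) (y ℓ) (1:ℂ) := by
        ext b c
        rw [hPi, hP, conjM_entry]
        show (if w k = v b ∧ w ℓ = v c then (1:ℂ) else 0) =
          (if y k = b ∧ y ℓ = c then (1:ℂ) else 0)
        refine if_congr (and_congr ?_ ?_) rfl rfl
        · rw [hwv k]
          exact ⟨fun h => v.injective h, fun h => congrArg v h⟩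
        · rw [hwv ℓ]
          exact ⟨fun h => v.injective h, fun h => congrArg v h⟩
      have step1 : Pi * (X ^ m * Matrix.single (w k) (w ℓ) (1:ℂ) * (Xᵀ) ^ m) * P =
          Z ^ m * Matrix.single (y k) (y ℓ) (1:ℂ) * (Zᵀ) ^ m := by
        rw [hPi, hP, conjM_mul, conjM_mul, conjM_pow, conjM_pow, conjM_transpose, hEq]
      rw [step1]
      -- replace Z by A
      have hyk := hyne k hklast
      have hyl : y ℓ ≠ Fin.last n := by
        refine hyne ℓ ?_
        intro h
        have hlk := hS.1
        rw [h, Fin.lt_def] at hlk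
        simp only [Fin.val_last] at hlk
        omega
      ext b c
      rw [← Matrix.transpose_pow, ← Matrix.transpose_pow, sandwich_entry, sandwich_entry]
      rw [(hpa m).1 (y k) hyk b, (hpa m).1 (y ℓ) hyl c]
    · rw [if_neg hS, if_neg (fun hc => hS ((hSpr ℓ).mpr hc)), mul_zero, zero_mul]
  -- conclude set equality
  ext M
  simp only [Set.mem_setOf_eq]
  constructor
  · rintro ⟨x, hx, rfl⟩
    exact ⟨x, fun ℓ h => hx ℓ (fun hs => h ((hSpr ℓ).mp hs)), (hBk x)⟩
  · rintro ⟨x, hx, rfl⟩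
    exact ⟨x, fun ℓ h => hx ℓ (fun hs => h ((hSpr ℓ).mpr hs)), (hBk x).symm⟩
end
end
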